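/- Let N > 1, m > 1, M > 0 and m-1 < q ≤ N(m-1)/(N-1). Suppose w : (r_l, ∞) → (0, ∞) is C¹ and satisfies w_r ≥ M r^{-(N-1)(q-m+1)/(m-1)} w^{q/(m-1)} on (r_l, ∞). Then w cannot have a finite positive limit nor tend to +∞ as r → ∞; in fact no such positive w exists on any interval (r_l, ∞). -/

import Mathlib

open Real Set

theorem stmt15 (N m M q rl : ℝ) (hN : 1 < N) (hm : 1 < m) (hM : 0 < M) (hrl : 0 < rl)
    (hq1 : m - 1 < q) (hq2 : q ≤ N * (m - 1) / (N - 1))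
    (w : ℝ → ℝ) (hreg : ContDiffOn ℝ 1 w (Set.Ioi rl))
    (hpos : ∀ r, rl < r → 0 < w r)
    (hineq : ∀ r, rl < r →
      M * r ^ (-(N - 1) * (q - m + 1) / (m - 1)) * w r ^ (q / (m - 1)) ≤ deriv w r) :
    False := by
  have hm1 : (0:ℝ) < m - 1 := by linarith
  have hN1 : (0:ℝ) < N - 1 := by linarith
  set α : ℝ := (q - m + 1) / (m - 1) with hα_def
  have hα : 0 < α := div_pos (by linarith) hm1
  set e : ℝ := -(N - 1) * (q - m + 1) / (m - 1) with he_def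
  have he : e = -((N - 1) * α) := by rw [he_def, hα_def]; ring
  have hq2' : q * (N - 1) ≤ N * (m - 1) := by
    rw [le_div_iff₀ hN1] at hq2; linarith
  have hNα : (N - 1) * α ≤ 1 := by
    rw [hα_def, ← mul_div_assoc, div_le_one hm1]; nlinarith
  have hem1 : (-1 : ℝ) ≤ e := by rw [he]; linarith
  -- derivative of w exists
  have hw : ∀ r, rl < r → HasDerivAt w (deriv w r) r := by
    intro r hr
    have h1 : DifferentiableOn ℝ w (Set.Ioi rl) := hreg.differentiableOn one_ne_zero
    exact ((h1 r hr).differentiableAt (Ioi_mem_nhds hr)).hasDerivAt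
  set φ : ℝ → ℝ := fun r => w r ^ (-α) + α * M * Real.log r with hφ_def
  have hφ : ∀ r, rl < r →
      HasDerivAt φ (deriv w r * (-α) * w r ^ (-α - 1) + α * M * r⁻¹) r := by
    intro r hr
    have h1 : HasDerivAt (fun y => w y ^ (-α)) (deriv w r * (-α) * w r ^ (-α - 1)) r :=
      (hw r hr).rpow_const (Or.inl (ne_of_gt (hpos r hr)))
    have h2 : HasDerivAt (fun y => α * M * Real.log y) (α * M * r⁻¹) r := by
      simpa using (Real.hasDerivAt_log ((lt_trans hrl hr).ne')).const_mul (α * M)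
    exact h1.add h2
  set r0 : ℝ := max (rl + 1) 1 with hr0_def
  have hr0l : rl < r0 := lt_of_lt_of_le (by linarith) (le_max_left _ _)
  have hr01 : (1:ℝ) ≤ r0 := le_max_right _ _
  -- key derivative bound
  have hkey : ∀ r, r0 ≤ r → deriv w r * (-α) * w r ^ (-α - 1) + α * M * r⁻¹ ≤ 0 := by
    intro r hr
    have hrrl : rl < r := lt_of_lt_of_le hr0l hr
    have hr1 : (1:ℝ) ≤ r := le_trans hr01 hr
    have hwr : 0 < w r := hpos r hrrl
    have hw1 : w r ^ (α + 1) * w r ^ (-α - 1) = 1 := by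
      rw [← Real.rpow_add hwr]; norm_num
    have hwpow : 0 < w r ^ (-α - 1) := Real.rpow_pos_of_pos hwr _
    have hqe : q / (m - 1) = α + 1 := by rw [hα_def]; field_simp; ring
    have h2 : M * r ^ e * w r ^ (α + 1) ≤ deriv w r := by
      have := hineq r hrrl
      rwa [hqe] at this
    have h3 : r⁻¹ ≤ r ^ e := by
      rw [← Real.rpow_neg_one r]
      exact Real.rpow_le_rpow_of_exponent_le hr1 hem1
    have h4 : α * M * r⁻¹ ≤ α * M * r ^ e :=
      mul_le_mul_of_nonneg_left h3 (by positivity)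
    have h5 : (M * r ^ e * w r ^ (α + 1)) * (α * w r ^ (-α - 1)) ≤
        deriv w r * (α * w r ^ (-α - 1)) :=
      mul_le_mul_of_nonneg_right h2 (by positivity)
    have h6 : (M * r ^ e * w r ^ (α + 1)) * (α * w r ^ (-α - 1)) = α * M * r ^ e := by
      linear_combination (α * M * r ^ e) * hw1
    have h7 : deriv w r * (-α) * w r ^ (-α - 1) = -(deriv w r * (α * w r ^ (-α - 1))) := by
      ring
    rw [h6] at h5
    linarith
  have hanti : AntitoneOn φ (Set.Ici r0) := by
    apply antitoneOn_of_deriv_nonpos (convex_Ici r0)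
    · intro x hx
      exact (hφ x (lt_of_lt_of_le hr0l hx)).continuousAt.continuousWithinAt
    · rw [interior_Ici]
      intro x hx
      exact (hφ x (lt_of_lt_of_le hr0l (le_of_lt hx))).differentiableAt.differentiableWithinAt
    · rw [interior_Ici]
      intro x hx
      rw [(hφ x (lt_of_lt_of_le hr0l (le_of_lt hx))).deriv]
      exact hkey x (le_of_lt hx)
  -- choose a large point
  have hαM : 0 < α * M := mul_pos hα hM
  set C : ℝ := (w r0 ^ (-α) + α * M * Real.log r0) / (α * M) with hC_def
  set r1 : ℝ := max r0 (Real.exp C) with hr1_def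
  have hr1ge : r0 ≤ r1 := le_max_left _ _
  have hmono := hanti (Set.mem_Ici.2 (le_refl r0)) (Set.mem_Ici.2 hr1ge) hr1ge
  have hlog : C ≤ Real.log r1 := by
    calc C = Real.log (Real.exp C) := (Real.log_exp C).symm
      _ ≤ Real.log r1 := Real.log_le_log (Real.exp_pos C) (le_max_right _ _)
  have hCeq : α * M * C = w r0 ^ (-α) + α * M * Real.log r0 := by
    rw [hC_def]; field_simp
  have hw1pos : 0 < w r1 ^ (-α) :=
    Real.rpow_pos_of_pos (hpos r1 (lt_of_lt_of_le hr0l hr1ge)) _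
  have hloggt : α * M * C ≤ α * M * Real.log r1 :=
    mul_le_mul_of_nonneg_left hlog (le_of_lt hαM)
  have hφr1 : φ r1 = w r1 ^ (-α) + α * M * Real.log r1 := rfl
  have hφr0 : φ r0 = w r0 ^ (-α) + α * M * Real.log r0 := rfl
  linarith [hmono, hw1pos]
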